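/- arXiv:2108.03556 — 4 statements merged into one kernel-verified Lean document; each statement's English description precedes it below -/
import Mathlib

section
/- Let (g,[·,·],⟨·,·,·⟩;ω) be a finite-dimensional symplectic Lie-Yamaguti algebra over a field K of characteristic 0. Then there exist a unique bilinear operation *: g×g→g and a unique trilinear operation {·,·,·}: g×g×g→g determined by ω(x*y,z) = −ω(y,[x,z]) and ω({x,y,z},w) = ω(x,⟨w,z,y⟩) for all x,y,z,w in g, and (g,*,{·,·,·}) is a pre-Lie-Yamaguti algebra compatible with the given structure, i.e., x*y−y*x=[x,y] and {x,y,z}_D+{x,y,z}−{y,x,z}=⟨x,y,z⟩ for all x,y,z in g. -/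
/-- A map of two variables that is linear in each variable separately. -/
def IsBilin (K : Type*) {M N P : Type*} [Field K] [AddCommGroup M] [Module K M]
    [AddCommGroup N] [Module K N] [AddCommGroup P] [Module K P]
    (f : M → N → P) : Prop :=
  (∀ y, IsLinearMap K fun x => f x y) ∧ (∀ x, IsLinearMap K fun y => f x y)

/-- A map of three variables that is linear in each variable separately. -/
def IsTrilin (K : Type*) {M P : Type*} [Field K] [AddCommGroup M] [Module K M]
    [AddCommGroup P] [Module K P] (f : M → M → M → P) : Prop :=
  (∀ y z, IsLinearMap K fun x => f x y z) ∧
  (∀ x z, IsLinearMap K fun y => f x y z) ∧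
  (∀ x y, IsLinearMap K fun z => f x y z)

/-- A Lie-Yamaguti algebra structure: a bilinear skew-symmetric binary bracket `b` and a
trilinear ternary bracket `t`, skew-symmetric in its first two arguments, satisfying
(LY1)-(LY4). -/
def IsLieYamaguti (K : Type*) {g : Type*} [Field K] [CharZero K] [AddCommGroup g] [Module K g]
    (b : g → g → g) (t : g → g → g → g) : Prop :=
  IsBilin K b ∧ IsTrilin K t ∧
  (∀ x y, b x y = - b y x) ∧
  (∀ x y z, t x y z = - t y x z) ∧
  (∀ x y z, b (b x y) z + b (b y z) x + b (b z x) y + t x y z + t y z x + t z x y = 0) ∧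
  (∀ x y z w, t (b x y) z w + t (b y z) x w + t (b z x) y w = 0) ∧
  (∀ x y z w, t x y (b z w) = b (t x y z) w + b z (t x y w)) ∧
  (∀ x y z w u, t x y (t z w u) = t (t x y z) w u + t z (t x y w) u + t z w (t x y u))

/-- The operator `D(x,y) = μ(y,x) − μ(x,y) + ρ(x)ρ(y) − ρ(y)ρ(x) − ρ([x,y])`. -/
def LYD (K : Type*) {g V : Type*} [Field K] [CharZero K] [AddCommGroup g] [Module K g]
    [AddCommGroup V] [Module K V]
    (b : g → g → g) (ρ : g → Module.End K V) (μ : g → g → Module.End K V)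
    (x y : g) : Module.End K V :=
  μ y x - μ x y + ρ x * ρ y - ρ y * ρ x - ρ (b x y)

/-- A representation of a Lie-Yamaguti algebra `(g, b, t)` on `V`. -/
def IsLYRep (K : Type*) {g V : Type*} [Field K] [CharZero K] [AddCommGroup g] [Module K g]
    [AddCommGroup V] [Module K V]
    (b : g → g → g) (t : g → g → g → g)
    (ρ : g → Module.End K V) (μ : g → g → Module.End K V) : Prop :=
  IsLinearMap K ρ ∧ IsBilin K μ ∧
  (∀ x y z, μ (b x y) z - μ x z * ρ y + μ y z * ρ x = 0) ∧
  (∀ x y z, μ x (b y z) - ρ y * μ x z + ρ z * μ x y = 0) ∧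
  (∀ x y z, ρ (t x y z) = LYD K b ρ μ x y * ρ z - ρ z * LYD K b ρ μ x y) ∧
  (∀ x y z w, μ z w * μ x y - μ y w * μ x z - μ x (t y z w) + LYD K b ρ μ y z * μ x w = 0) ∧
  (∀ x y z w, μ (t x y z) w + μ z (t x y w) = LYD K b ρ μ x y * μ z w - μ z w * LYD K b ρ μ x y)

/-- A relative Rota-Baxter operator on a Lie-Yamaguti algebra `(g, b, t)` with respect to a
representation `(V; ρ, μ)`. -/
def IsRelRB (K : Type*) {g V : Type*} [Field K] [CharZero K] [AddCommGroup g] [Module K g]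
    [AddCommGroup V] [Module K V]
    (b : g → g → g) (t : g → g → g → g)
    (ρ : g → Module.End K V) (μ : g → g → Module.End K V) (T : V → g) : Prop :=
  IsLinearMap K T ∧
  (∀ u v, b (T u) (T v) = T (ρ (T u) v - ρ (T v) u)) ∧
  (∀ u v w, t (T u) (T v) (T w) =
    T (LYD K b ρ μ (T u) (T v) w + μ (T v) (T w) u - μ (T u) (T w) v))

/-- The commutator `[x,y]_C = x*y − y*x`. -/
def preC {A : Type*} [AddCommGroup A] (m : A → A → A) (x y : A) : A := m x y - m y x

/-- The associator `(x,y,z) = (x*y)*z − x*(y*z)`. -/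
def preAssoc {A : Type*} [AddCommGroup A] (m : A → A → A) (x y z : A) : A :=
  m (m x y) z - m x (m y z)

/-- `{x,y,z}_D = {z,y,x} − {z,x,y} + (y,x,z) − (x,y,z)`. -/
def preD {A : Type*} [AddCommGroup A] (m : A → A → A) (br : A → A → A → A) (x y z : A) : A :=
  br z y x - br z x y + preAssoc m y x z - preAssoc m x y z

/-- A pre-Lie-Yamaguti algebra structure on `A`. -/
def IsPreLY (K : Type*) {A : Type*} [Field K] [CharZero K] [AddCommGroup A] [Module K A]
    (m : A → A → A) (br : A → A → A → A) : Prop :=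
  IsBilin K m ∧ IsTrilin K br ∧
  (∀ x y z w, br z (preC m x y) w - br (m y z) x w + br (m x z) y w = 0) ∧
  (∀ x y z w, br x y (preC m z w) = m z (br x y w) - m w (br x y z)) ∧
  (∀ x y z w t, br (br x y z) w t - br (br x y w) z t - br x y (preD m br z w t)
      - br x y (br z w t) + br x y (br w z t) + preD m br z w (br x y t) = 0) ∧
  (∀ x y z w t, br z (preD m br x y w) t + br z (br x y w) t - br z (br y x w) t
      + br z w (preD m br x y t) + br z w (br x y t) - br z w (br y x t)
      = preD m br x y (br z w t) - br (preD m br x y z) w t) ∧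
  (∀ x y z w, m (preD m br x y z) w + m (br x y z) w - m (br y x z) w
      = preD m br x y (m z w) - m z (preD m br x y w))

/-- The ternary bracket `⟨x,y,z⟩_C = {x,y,z}_D + {x,y,z} − {y,x,z}` of the subadjacent
Lie-Yamaguti algebra of a pre-Lie-Yamaguti algebra. -/
def subT {A : Type*} [AddCommGroup A] (m : A → A → A) (br : A → A → A → A) (x y z : A) : A :=
  preD m br x y z + br x y z - br y x z

/-- A symplectic structure on a Lie-Yamaguti algebra `(g, b, t)`: a nondegenerate
skew-symmetric bilinear form satisfying the two cocycle conditions. -/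
def IsSymplectic (K : Type*) {g : Type*} [Field K] [CharZero K] [AddCommGroup g] [Module K g]
    (b : g → g → g) (t : g → g → g → g) (ω : g → g → K) : Prop :=
  IsBilin K ω ∧ (∀ x y, ω x y = - ω y x) ∧ (∀ x, (∀ y, ω x y = 0) → x = 0) ∧
  (∀ x y z, ω x (b y z) + ω y (b z x) + ω z (b x y) = 0) ∧
  (∀ x y z w, ω z (t x y w) - ω x (t w z y) + ω y (t w z x) - ω w (t x y z) = 0)

/-- The dual map `ρ*` defined by `(ρ*(x) α)(v) = −α(ρ(x) v)`. -/
def dualRho (K : Type*) {g V : Type*} [Field K] [CharZero K] [AddCommGroup g] [Module K g]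
    [AddCommGroup V] [Module K V] (ρ : g → Module.End K V) (x : g) :
    Module.End K (Module.Dual K V) := -(ρ x).dualMap

/-- The dual map `μ*` defined by `(μ*(x,y) α)(v) = −α(μ(x,y) v)`. -/
def dualMu (K : Type*) {g V : Type*} [Field K] [CharZero K] [AddCommGroup g] [Module K g]
    [AddCommGroup V] [Module K V] (μ : g → g → Module.End K V) (x y : g) :
    Module.End K (Module.Dual K V) := -(μ x y).dualMap

/-- Left multiplication `L_x` of a pre-Lie-Yamaguti algebra, as a linear endomorphism. -/
def Llin (K : Type*) {A : Type*} [Field K] [CharZero K] [AddCommGroup A] [Module K A]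
    (m : A → A → A) (hm : IsBilin K m) (x : A) : Module.End K A :=
  IsLinearMap.mk' (fun v => m x v) (hm.2 x)

/-- `𝓡(x,y) : z ↦ {z,x,y}` of a pre-Lie-Yamaguti algebra, as a linear endomorphism. -/
def Rlin (K : Type*) {A : Type*} [Field K] [CharZero K] [AddCommGroup A] [Module K A]
    (br : A → A → A → A) (hbr : IsTrilin K br) (x y : A) : Module.End K A :=
  IsLinearMap.mk' (fun v => br v x y) (hbr.1 x y)

/-- `𝓛(x,y) : z ↦ {x,y,z}_D` of a pre-Lie-Yamaguti algebra, as a linear endomorphism. -/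
def Dlin (K : Type*) {A : Type*} [Field K] [CharZero K] [AddCommGroup A] [Module K A]
    (m : A → A → A) (br : A → A → A → A) (hm : IsBilin K m) (hbr : IsTrilin K br)
    (x y : A) : Module.End K A :=
  Rlin K br hbr y x - Rlin K br hbr x y
    + (Llin K m hm (m y x) - Llin K m hm y * Llin K m hm x)
    - (Llin K m hm (m x y) - Llin K m hm x * Llin K m hm y)
theorem statement15_key (K g : Type*) [Field K] [CharZero K] [AddCommGroup g] [Module K g]
    (b : g → g → g) (t : g → g → g → g) (h : IsLieYamaguti K b t)
    (ω : g → g → K) (hω : IsSymplectic K b t ω)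
    (m : g → g → g) (br : g → g → g → g)
    (hm : IsBilin K m) (hmd0 : ∀ x y z, ω (m x y) z = - ω y (b x z))
    (hbrt : IsTrilin K br) (hbrd0 : ∀ x y z w, ω (br x y z) w = ω x (t w z y)) :
    IsPreLY K m br ∧ (∀ x y, m x y - m y x = b x y) ∧
      (∀ x y z, preD m br x y z + br x y z - br y x z = t x y z) := by
  obtain ⟨⟨hω1, hω2⟩, hskew, hnd, hc1, hc2⟩ := hω
  obtain ⟨hbB, hbT, hbs, hts, hLY1, hLY2, hLY3, hLY4⟩ := h
  have wa1 : ∀ (a d c : g), ω (a + d) c = ω a c + ω d c := fun a d c => (hω1 c).map_add a d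
  have ws1 : ∀ (a d c : g), ω (a - d) c = ω a c - ω d c := fun a d c => (hω1 c).map_sub a d
  have wn1 : ∀ (a c : g), ω (-a) c = -ω a c := fun a c => (hω1 c).map_neg a
  have wz1 : ∀ (c : g), ω 0 c = 0 := fun c => (hω1 c).map_zero
  have wa2 : ∀ (c a d : g), ω c (a + d) = ω c a + ω c d := fun c a d => (hω2 c).map_add a d
  have ws2 : ∀ (c a d : g), ω c (a - d) = ω c a - ω c d := fun c a d => (hω2 c).map_sub a d
  have wn2 : ∀ (c a : g), ω c (-a) = -ω c a := fun c a => (hω2 c).map_neg a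
  have wz2 : ∀ (c : g), ω c 0 = 0 := fun c => (hω2 c).map_zero
  have ba1 : ∀ (a d v2 : g), b (a + d) v2 = b a v2 + b d v2 := fun a d v2 => (hbB.1 v2).map_add a d
  have bs1 : ∀ (a d v2 : g), b (a - d) v2 = b a v2 - b d v2 := fun a d v2 => (hbB.1 v2).map_sub a d
  have bn1 : ∀ (a v2 : g), b (-a) v2 = -b a v2 := fun a v2 => (hbB.1 v2).map_neg a
  have ba2 : ∀ (v1 a d : g), b v1 (a + d) = b v1 a + b v1 d := fun v1 a d => (hbB.2 v1).map_add a d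
  have bs2 : ∀ (v1 a d : g), b v1 (a - d) = b v1 a - b v1 d := fun v1 a d => (hbB.2 v1).map_sub a d
  have bn2 : ∀ (v1 a : g), b v1 (-a) = -b v1 a := fun v1 a => (hbB.2 v1).map_neg a
  have ma1 : ∀ (a d v2 : g), m (a + d) v2 = m a v2 + m d v2 := fun a d v2 => (hm.1 v2).map_add a d
  have ms1 : ∀ (a d v2 : g), m (a - d) v2 = m a v2 - m d v2 := fun a d v2 => (hm.1 v2).map_sub a d
  have mn1 : ∀ (a v2 : g), m (-a) v2 = -m a v2 := fun a v2 => (hm.1 v2).map_neg a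
  have ma2 : ∀ (v1 a d : g), m v1 (a + d) = m v1 a + m v1 d := fun v1 a d => (hm.2 v1).map_add a d
  have ms2 : ∀ (v1 a d : g), m v1 (a - d) = m v1 a - m v1 d := fun v1 a d => (hm.2 v1).map_sub a d
  have mn2 : ∀ (v1 a : g), m v1 (-a) = -m v1 a := fun v1 a => (hm.2 v1).map_neg a
  have ta1 : ∀ (a d v2 v3 : g), t (a + d) v2 v3 = t a v2 v3 + t d v2 v3 := fun a d v2 v3 => (hbT.1 v2 v3).map_add a d
  have ts1 : ∀ (a d v2 v3 : g), t (a - d) v2 v3 = t a v2 v3 - t d v2 v3 := fun a d v2 v3 => (hbT.1 v2 v3).map_sub a d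
  have tn1 : ∀ (a v2 v3 : g), t (-a) v2 v3 = -t a v2 v3 := fun a v2 v3 => (hbT.1 v2 v3).map_neg a
  have ta2 : ∀ (a d v1 v3 : g), t v1 (a + d) v3 = t v1 a v3 + t v1 d v3 := fun a d v1 v3 => (hbT.2.1 v1 v3).map_add a d
  have ts2 : ∀ (a d v1 v3 : g), t v1 (a - d) v3 = t v1 a v3 - t v1 d v3 := fun a d v1 v3 => (hbT.2.1 v1 v3).map_sub a d
  have tn2 : ∀ (a v1 v3 : g), t v1 (-a) v3 = -t v1 a v3 := fun a v1 v3 => (hbT.2.1 v1 v3).map_neg a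
  have ta3 : ∀ (a d v1 v2 : g), t v1 v2 (a + d) = t v1 v2 a + t v1 v2 d := fun a d v1 v2 => (hbT.2.2 v1 v2).map_add a d
  have ts3 : ∀ (a d v1 v2 : g), t v1 v2 (a - d) = t v1 v2 a - t v1 v2 d := fun a d v1 v2 => (hbT.2.2 v1 v2).map_sub a d
  have tn3 : ∀ (a v1 v2 : g), t v1 v2 (-a) = -t v1 v2 a := fun a v1 v2 => (hbT.2.2 v1 v2).map_neg a
  have ra1 : ∀ (a d v2 v3 : g), br (a + d) v2 v3 = br a v2 v3 + br d v2 v3 := fun a d v2 v3 => (hbrt.1 v2 v3).map_add a d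
  have rs1 : ∀ (a d v2 v3 : g), br (a - d) v2 v3 = br a v2 v3 - br d v2 v3 := fun a d v2 v3 => (hbrt.1 v2 v3).map_sub a d
  have rn1 : ∀ (a v2 v3 : g), br (-a) v2 v3 = -br a v2 v3 := fun a v2 v3 => (hbrt.1 v2 v3).map_neg a
  have ra2 : ∀ (a d v1 v3 : g), br v1 (a + d) v3 = br v1 a v3 + br v1 d v3 := fun a d v1 v3 => (hbrt.2.1 v1 v3).map_add a d
  have rs2 : ∀ (a d v1 v3 : g), br v1 (a - d) v3 = br v1 a v3 - br v1 d v3 := fun a d v1 v3 => (hbrt.2.1 v1 v3).map_sub a d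
  have rn2 : ∀ (a v1 v3 : g), br v1 (-a) v3 = -br v1 a v3 := fun a v1 v3 => (hbrt.2.1 v1 v3).map_neg a
  have ra3 : ∀ (a d v1 v2 : g), br v1 v2 (a + d) = br v1 v2 a + br v1 v2 d := fun a d v1 v2 => (hbrt.2.2 v1 v2).map_add a d
  have rs3 : ∀ (a d v1 v2 : g), br v1 v2 (a - d) = br v1 v2 a - br v1 v2 d := fun a d v1 v2 => (hbrt.2.2 v1 v2).map_sub a d
  have rn3 : ∀ (a v1 v2 : g), br v1 v2 (-a) = -br v1 v2 a := fun a v1 v2 => (hbrt.2.2 v1 v2).map_neg a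
  have hmd : ∀ (x y z : g), ω (m x y) z = -ω y (b x z) := hmd0
  have hbrd : ∀ (x y z w : g), ω (br x y z) w = ω x (t w z y) := hbrd0
  have hsk : ∀ (a d : g), ω a d + ω d a = 0 := fun a d => by rw [hskew a d]; ring
  have hbsk : ∀ (p a c : g), ω p (b a c) + ω p (b c a) = 0 := fun p a c => by rw [hbs a c, wn2]; ring
  have htsk : ∀ (p a c d : g), ω p (t a c d) + ω p (t c a d) = 0 := fun p a c d => by rw [hts a c d, wn2]; ring
  have hly1 : ∀ (p a c d : g), ω p (b (b a c) d) + ω p (b (b c d) a) + ω p (b (b d a) c) + ω p (t a c d) + ω p (t c d a) + ω p (t d a c) = 0 := by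
    intro p a c d
    have h0 := congrArg (ω p) (hLY1 a c d)
    simp only [wa1, ws1, wn1, wz1, wa2, ws2, wn2, wz2, ba1, bs1, bn1, ba2, bs2, bn2, ma1, ms1, mn1, ma2, ms2, mn2, ta1, ts1, tn1, ta2, ts2, tn2, ta3, ts3, tn3, ra1, rs1, rn1, ra2, rs2, rn2, ra3, rs3, rn3, hmd, hbrd] at h0
    linear_combination h0
  have hly2 : ∀ (p a c d e : g), ω p (t (b a c) d e) + ω p (t (b c d) a e) + ω p (t (b d a) c e) = 0 := by
    intro p a c d e
    have h0 := congrArg (ω p) (hLY2 a c d e)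
    simp only [wa1, ws1, wn1, wz1, wa2, ws2, wn2, wz2, ba1, bs1, bn1, ba2, bs2, bn2, ma1, ms1, mn1, ma2, ms2, mn2, ta1, ts1, tn1, ta2, ts2, tn2, ta3, ts3, tn3, ra1, rs1, rn1, ra2, rs2, rn2, ra3, rs3, rn3, hmd, hbrd] at h0
    linear_combination h0
  have hly3 : ∀ (p a c d e : g), ω p (t a c (b d e)) - ω p (b (t a c d) e) - ω p (b d (t a c e)) = 0 := by
    intro p a c d e
    have h0 := congrArg (ω p) (hLY3 a c d e)
    simp only [wa1, ws1, wn1, wz1, wa2, ws2, wn2, wz2, ba1, bs1, bn1, ba2, bs2, bn2, ma1, ms1, mn1, ma2, ms2, mn2, ta1, ts1, tn1, ta2, ts2, tn2, ta3, ts3, tn3, ra1, rs1, rn1, ra2, rs2, rn2, ra3, rs3, rn3, hmd, hbrd] at h0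
    linear_combination h0
  have hly4 : ∀ (p a c d e f : g), ω p (t a c (t d e f)) - ω p (t (t a c d) e f) - ω p (t d (t a c e) f) - ω p (t d e (t a c f)) = 0 := by
    intro p a c d e f
    have h0 := congrArg (ω p) (hLY4 a c d e f)
    simp only [wa1, ws1, wn1, wz1, wa2, ws2, wn2, wz2, ba1, bs1, bn1, ba2, bs2, bn2, ma1, ms1, mn1, ma2, ms2, mn2, ta1, ts1, tn1, ta2, ts2, tn2, ta3, ts3, tn3, ra1, rs1, rn1, ra2, rs2, rn2, ra3, rs3, rn3, hmd, hbrd] at h0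
    linear_combination h0
  have hcomm : ∀ x y : g, m x y - m y x = b x y := by
    intro x y
    rw [← sub_eq_zero]
    refine hnd _ fun c => ?_
    have hC0 : ω y (b c x) + ω y (b x c) = 0 := by
      have h0 := hbsk y c x
      try simp only [wa1, ws1, wn1, wz1, wa2, ws2, wn2, wz2, ba1, bs1, bn1, ba2, bs2, bn2, ma1, ms1, mn1, ma2, ms2, mn2, ta1, ts1, tn1, ta2, ts2, tn2, ta3, ts3, tn3, ra1, rs1, rn1, ra2, rs2, rn2, ra3, rs3, rn3, hmd, hbrd] at h0
      linear_combination h0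
    have hC1 : ω c (b x y) + ω x (b y c) + ω y (b c x) = 0 := by
      have h0 := hc1 c x y
      try simp only [wa1, ws1, wn1, wz1, wa2, ws2, wn2, wz2, ba1, bs1, bn1, ba2, bs2, bn2, ma1, ms1, mn1, ma2, ms2, mn2, ta1, ts1, tn1, ta2, ts2, tn2, ta3, ts3, tn3, ra1, rs1, rn1, ra2, rs2, rn2, ra3, rs3, rn3, hmd, hbrd] at h0
      linear_combination h0
    have hC2 : ω c (b x y) + ω (b x y) c = 0 := by
      have h0 := hsk c (b x y)
      try simp only [wa1, ws1, wn1, wz1, wa2, ws2, wn2, wz2, ba1, bs1, bn1, ba2, bs2, bn2, ma1, ms1, mn1, ma2, ms2, mn2, ta1, ts1, tn1, ta2, ts2, tn2, ta3, ts3, tn3, ra1, rs1, rn1, ra2, rs2, rn2, ra3, rs3, rn3, hmd, hbrd] at h0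
      linear_combination h0
    simp only [wa1, ws1, wn1, wz1, wa2, ws2, wn2, wz2, ba1, bs1, bn1, ba2, bs2, bn2, ma1, ms1, mn1, ma2, ms2, mn2, ta1, ts1, tn1, ta2, ts2, tn2, ta3, ts3, tn3, ra1, rs1, rn1, ra2, rs2, rn2, ra3, rs3, rn3, hmd, hbrd]
    linear_combination (-1 : K) * hC0 + hC1 + (-1 : K) * hC2
  have hCfor : ∀ x y : g, preC m x y = b x y := fun x y => hcomm x y
  have hter : ∀ x y z : g, preD m br x y z + br x y z - br y x z = t x y z := by
    intro x y z
    rw [← sub_eq_zero]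
    refine hnd _ fun c => ?_
    have hT0 : -ω z (b (b x y) c) + ω z (b (m x y) c) - ω z (b (m y x) c) = 0 := by
      have h0 := congrArg (fun ξ => ω z (b ξ c)) (hcomm x y)
      try simp only [wa1, ws1, wn1, wz1, wa2, ws2, wn2, wz2, ba1, bs1, bn1, ba2, bs2, bn2, ma1, ms1, mn1, ma2, ms2, mn2, ta1, ts1, tn1, ta2, ts2, tn2, ta3, ts3, tn3, ra1, rs1, rn1, ra2, rs2, rn2, ra3, rs3, rn3, hmd, hbrd] at h0
      linear_combination h0
    have hT1 : ω x (b c (b z y)) + ω x (b (b z y) c) = 0 := by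
      have h0 := hbsk x c (b z y)
      try simp only [wa1, ws1, wn1, wz1, wa2, ws2, wn2, wz2, ba1, bs1, bn1, ba2, bs2, bn2, ma1, ms1, mn1, ma2, ms2, mn2, ta1, ts1, tn1, ta2, ts2, tn2, ta3, ts3, tn3, ra1, rs1, rn1, ra2, rs2, rn2, ra3, rs3, rn3, hmd, hbrd] at h0
      linear_combination h0
    have hT2 : ω y (b c (b x z)) + ω y (b (b x z) c) = 0 := by
      have h0 := hbsk y c (b x z)
      try simp only [wa1, ws1, wn1, wz1, wa2, ws2, wn2, wz2, ba1, bs1, bn1, ba2, bs2, bn2, ma1, ms1, mn1, ma2, ms2, mn2, ta1, ts1, tn1, ta2, ts2, tn2, ta3, ts3, tn3, ra1, rs1, rn1, ra2, rs2, rn2, ra3, rs3, rn3, hmd, hbrd] at h0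
      linear_combination h0
    have hT3 : ω y (b x (b z c)) + ω y (b (b z c) x) = 0 := by
      have h0 := hbsk y x (b z c)
      try simp only [wa1, ws1, wn1, wz1, wa2, ws2, wn2, wz2, ba1, bs1, bn1, ba2, bs2, bn2, ma1, ms1, mn1, ma2, ms2, mn2, ta1, ts1, tn1, ta2, ts2, tn2, ta3, ts3, tn3, ra1, rs1, rn1, ra2, rs2, rn2, ra3, rs3, rn3, hmd, hbrd] at h0
      linear_combination h0
    have hT4 : ω z (b c (b x y)) + ω z (b (b x y) c) = 0 := by
      have h0 := hbsk z c (b x y)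
      try simp only [wa1, ws1, wn1, wz1, wa2, ws2, wn2, wz2, ba1, bs1, bn1, ba2, bs2, bn2, ma1, ms1, mn1, ma2, ms2, mn2, ta1, ts1, tn1, ta2, ts2, tn2, ta3, ts3, tn3, ra1, rs1, rn1, ra2, rs2, rn2, ra3, rs3, rn3, hmd, hbrd] at h0
      linear_combination h0
    have hT5 : ω (b y c) (b x z) + ω (b y c) (b z x) = 0 := by
      have h0 := hbsk (b y c) x z
      try simp only [wa1, ws1, wn1, wz1, wa2, ws2, wn2, wz2, ba1, bs1, bn1, ba2, bs2, bn2, ma1, ms1, mn1, ma2, ms2, mn2, ta1, ts1, tn1, ta2, ts2, tn2, ta3, ts3, tn3, ra1, rs1, rn1, ra2, rs2, rn2, ra3, rs3, rn3, hmd, hbrd] at h0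
      linear_combination h0
    have hT6 : ω (b z c) (b x y) + ω (b z c) (b y x) = 0 := by
      have h0 := hbsk (b z c) x y
      try simp only [wa1, ws1, wn1, wz1, wa2, ws2, wn2, wz2, ba1, bs1, bn1, ba2, bs2, bn2, ma1, ms1, mn1, ma2, ms2, mn2, ta1, ts1, tn1, ta2, ts2, tn2, ta3, ts3, tn3, ra1, rs1, rn1, ra2, rs2, rn2, ra3, rs3, rn3, hmd, hbrd] at h0
      linear_combination h0
    have hT7 : ω c (b (b x y) z) + ω z (b c (b x y)) + ω (b x y) (b z c) = 0 := by
      have h0 := hc1 c (b x y) z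
      try simp only [wa1, ws1, wn1, wz1, wa2, ws2, wn2, wz2, ba1, bs1, bn1, ba2, bs2, bn2, ma1, ms1, mn1, ma2, ms2, mn2, ta1, ts1, tn1, ta2, ts2, tn2, ta3, ts3, tn3, ra1, rs1, rn1, ra2, rs2, rn2, ra3, rs3, rn3, hmd, hbrd] at h0
      linear_combination h0
    have hT8 : ω c (b (b x z) y) + ω y (b c (b x z)) + ω (b x z) (b y c) = 0 := by
      have h0 := hc1 c (b x z) y
      try simp only [wa1, ws1, wn1, wz1, wa2, ws2, wn2, wz2, ba1, bs1, bn1, ba2, bs2, bn2, ma1, ms1, mn1, ma2, ms2, mn2, ta1, ts1, tn1, ta2, ts2, tn2, ta3, ts3, tn3, ra1, rs1, rn1, ra2, rs2, rn2, ra3, rs3, rn3, hmd, hbrd] at h0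
      linear_combination h0
    have hT9 : ω c (b (b z y) x) + ω x (b c (b z y)) + ω (b z y) (b x c) = 0 := by
      have h0 := hc1 c (b z y) x
      try simp only [wa1, ws1, wn1, wz1, wa2, ws2, wn2, wz2, ba1, bs1, bn1, ba2, bs2, bn2, ma1, ms1, mn1, ma2, ms2, mn2, ta1, ts1, tn1, ta2, ts2, tn2, ta3, ts3, tn3, ra1, rs1, rn1, ra2, rs2, rn2, ra3, rs3, rn3, hmd, hbrd] at h0
      linear_combination h0
    have hT10 : ω x (b (b y c) z) + ω z (b x (b y c)) + ω (b y c) (b z x) = 0 := by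
      have h0 := hc1 x (b y c) z
      try simp only [wa1, ws1, wn1, wz1, wa2, ws2, wn2, wz2, ba1, bs1, bn1, ba2, bs2, bn2, ma1, ms1, mn1, ma2, ms2, mn2, ta1, ts1, tn1, ta2, ts2, tn2, ta3, ts3, tn3, ra1, rs1, rn1, ra2, rs2, rn2, ra3, rs3, rn3, hmd, hbrd] at h0
      linear_combination h0
    have hT11 : ω x (b (b z c) y) + ω y (b x (b z c)) + ω (b z c) (b y x) = 0 := by
      have h0 := hc1 x (b z c) y
      try simp only [wa1, ws1, wn1, wz1, wa2, ws2, wn2, wz2, ba1, bs1, bn1, ba2, bs2, bn2, ma1, ms1, mn1, ma2, ms2, mn2, ta1, ts1, tn1, ta2, ts2, tn2, ta3, ts3, tn3, ra1, rs1, rn1, ra2, rs2, rn2, ra3, rs3, rn3, hmd, hbrd] at h0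
      linear_combination h0
    have hT12 : ω y (b (b x c) z) + ω z (b y (b x c)) + ω (b x c) (b z y) = 0 := by
      have h0 := hc1 (b x c) z y
      try simp only [wa1, ws1, wn1, wz1, wa2, ws2, wn2, wz2, ba1, bs1, bn1, ba2, bs2, bn2, ma1, ms1, mn1, ma2, ms2, mn2, ta1, ts1, tn1, ta2, ts2, tn2, ta3, ts3, tn3, ra1, rs1, rn1, ra2, rs2, rn2, ra3, rs3, rn3, hmd, hbrd] at h0
      linear_combination h0
    have hT13 : -ω c (t z y x) + ω x (t z y c) + ω y (t c x z) - ω z (t c x y) = 0 := by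
      have h0 := hc2 c x y z
      try simp only [wa1, ws1, wn1, wz1, wa2, ws2, wn2, wz2, ba1, bs1, bn1, ba2, bs2, bn2, ma1, ms1, mn1, ma2, ms2, mn2, ta1, ts1, tn1, ta2, ts2, tn2, ta3, ts3, tn3, ra1, rs1, rn1, ra2, rs2, rn2, ra3, rs3, rn3, hmd, hbrd] at h0
      linear_combination h0
    have hT14 : -ω c (t x z y) - ω x (t c y z) + ω y (t x z c) + ω z (t c y x) = 0 := by
      have h0 := hc2 c y z x
      try simp only [wa1, ws1, wn1, wz1, wa2, ws2, wn2, wz2, ba1, bs1, bn1, ba2, bs2, bn2, ma1, ms1, mn1, ma2, ms2, mn2, ta1, ts1, tn1, ta2, ts2, tn2, ta3, ts3, tn3, ra1, rs1, rn1, ra2, rs2, rn2, ra3, rs3, rn3, hmd, hbrd] at h0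
      linear_combination h0
    have hT15 : ω c (b (b x y) z) + ω c (b (b y z) x) + ω c (b (b z x) y) + ω c (t x y z) + ω c (t y z x) + ω c (t z x y) = 0 := by
      have h0 := hly1 c x y z
      try simp only [wa1, ws1, wn1, wz1, wa2, ws2, wn2, wz2, ba1, bs1, bn1, ba2, bs2, bn2, ma1, ms1, mn1, ma2, ms2, mn2, ta1, ts1, tn1, ta2, ts2, tn2, ta3, ts3, tn3, ra1, rs1, rn1, ra2, rs2, rn2, ra3, rs3, rn3, hmd, hbrd] at h0
      linear_combination h0
    have hT16 : ω x (b (b c z) y) + ω x (b (b y c) z) + ω x (b (b z y) c) + ω x (t c z y) + ω x (t y c z) + ω x (t z y c) = 0 := by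
      have h0 := hly1 x c z y
      try simp only [wa1, ws1, wn1, wz1, wa2, ws2, wn2, wz2, ba1, bs1, bn1, ba2, bs2, bn2, ma1, ms1, mn1, ma2, ms2, mn2, ta1, ts1, tn1, ta2, ts2, tn2, ta3, ts3, tn3, ra1, rs1, rn1, ra2, rs2, rn2, ra3, rs3, rn3, hmd, hbrd] at h0
      linear_combination h0
    have hT17 : ω y (b (b c x) z) + ω y (b (b x z) c) + ω y (b (b z c) x) + ω y (t c x z) + ω y (t x z c) + ω y (t z c x) = 0 := by
      have h0 := hly1 y c x z
      try simp only [wa1, ws1, wn1, wz1, wa2, ws2, wn2, wz2, ba1, bs1, bn1, ba2, bs2, bn2, ma1, ms1, mn1, ma2, ms2, mn2, ta1, ts1, tn1, ta2, ts2, tn2, ta3, ts3, tn3, ra1, rs1, rn1, ra2, rs2, rn2, ra3, rs3, rn3, hmd, hbrd] at h0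
      linear_combination h0
    have hT18 : ω c (t x y z) + ω (t x y z) c = 0 := by
      have h0 := hsk c (t x y z)
      try simp only [wa1, ws1, wn1, wz1, wa2, ws2, wn2, wz2, ba1, bs1, bn1, ba2, bs2, bn2, ma1, ms1, mn1, ma2, ms2, mn2, ta1, ts1, tn1, ta2, ts2, tn2, ta3, ts3, tn3, ra1, rs1, rn1, ra2, rs2, rn2, ra3, rs3, rn3, hmd, hbrd] at h0
      linear_combination h0
    have hT19 : ω (b x c) (b z y) + ω (b z y) (b x c) = 0 := by
      have h0 := hsk (b x c) (b z y)
      try simp only [wa1, ws1, wn1, wz1, wa2, ws2, wn2, wz2, ba1, bs1, bn1, ba2, bs2, bn2, ma1, ms1, mn1, ma2, ms2, mn2, ta1, ts1, tn1, ta2, ts2, tn2, ta3, ts3, tn3, ra1, rs1, rn1, ra2, rs2, rn2, ra3, rs3, rn3, hmd, hbrd] at h0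
      linear_combination h0
    have hT20 : ω (b x y) (b z c) + ω (b z c) (b x y) = 0 := by
      have h0 := hsk (b x y) (b z c)
      try simp only [wa1, ws1, wn1, wz1, wa2, ws2, wn2, wz2, ba1, bs1, bn1, ba2, bs2, bn2, ma1, ms1, mn1, ma2, ms2, mn2, ta1, ts1, tn1, ta2, ts2, tn2, ta3, ts3, tn3, ra1, rs1, rn1, ra2, rs2, rn2, ra3, rs3, rn3, hmd, hbrd] at h0
      linear_combination h0
    have hT21 : ω (b x z) (b y c) + ω (b y c) (b x z) = 0 := by
      have h0 := hsk (b y c) (b x z)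
      try simp only [wa1, ws1, wn1, wz1, wa2, ws2, wn2, wz2, ba1, bs1, bn1, ba2, bs2, bn2, ma1, ms1, mn1, ma2, ms2, mn2, ta1, ts1, tn1, ta2, ts2, tn2, ta3, ts3, tn3, ra1, rs1, rn1, ra2, rs2, rn2, ra3, rs3, rn3, hmd, hbrd] at h0
      linear_combination h0
    have hT22 : ω c (t x z y) + ω c (t z x y) = 0 := by
      have h0 := htsk c x z y
      try simp only [wa1, ws1, wn1, wz1, wa2, ws2, wn2, wz2, ba1, bs1, bn1, ba2, bs2, bn2, ma1, ms1, mn1, ma2, ms2, mn2, ta1, ts1, tn1, ta2, ts2, tn2, ta3, ts3, tn3, ra1, rs1, rn1, ra2, rs2, rn2, ra3, rs3, rn3, hmd, hbrd] at h0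
      linear_combination h0
    have hT23 : ω c (t y z x) + ω c (t z y x) = 0 := by
      have h0 := htsk c y z x
      try simp only [wa1, ws1, wn1, wz1, wa2, ws2, wn2, wz2, ba1, bs1, bn1, ba2, bs2, bn2, ma1, ms1, mn1, ma2, ms2, mn2, ta1, ts1, tn1, ta2, ts2, tn2, ta3, ts3, tn3, ra1, rs1, rn1, ra2, rs2, rn2, ra3, rs3, rn3, hmd, hbrd] at h0
      linear_combination h0
    have hT24 : ω x (t c y z) + ω x (t y c z) = 0 := by
      have h0 := htsk x c y z
      try simp only [wa1, ws1, wn1, wz1, wa2, ws2, wn2, wz2, ba1, bs1, bn1, ba2, bs2, bn2, ma1, ms1, mn1, ma2, ms2, mn2, ta1, ts1, tn1, ta2, ts2, tn2, ta3, ts3, tn3, ra1, rs1, rn1, ra2, rs2, rn2, ra3, rs3, rn3, hmd, hbrd] at h0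
      linear_combination h0
    have hT25 : ω y (t c z x) + ω y (t z c x) = 0 := by
      have h0 := htsk y c z x
      try simp only [wa1, ws1, wn1, wz1, wa2, ws2, wn2, wz2, ba1, bs1, bn1, ba2, bs2, bn2, ma1, ms1, mn1, ma2, ms2, mn2, ta1, ts1, tn1, ta2, ts2, tn2, ta3, ts3, tn3, ra1, rs1, rn1, ra2, rs2, rn2, ra3, rs3, rn3, hmd, hbrd] at h0
      linear_combination h0
    have hT26 : ω y (b (b c x) z) + ω y (b (b x c) z) = 0 := by
      have h0 := congrArg (fun ξ => ω y (b ξ z)) (hbs c x)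
      try simp only [wa1, ws1, wn1, wz1, wa2, ws2, wn2, wz2, ba1, bs1, bn1, ba2, bs2, bn2, ma1, ms1, mn1, ma2, ms2, mn2, ta1, ts1, tn1, ta2, ts2, tn2, ta3, ts3, tn3, ra1, rs1, rn1, ra2, rs2, rn2, ra3, rs3, rn3, hmd, hbrd] at h0
      linear_combination h0
    have hT27 : ω c (b (b y z) x) + ω c (b (b z y) x) = 0 := by
      have h0 := congrArg (fun ξ => ω c (b ξ x)) (hbs y z)
      try simp only [wa1, ws1, wn1, wz1, wa2, ws2, wn2, wz2, ba1, bs1, bn1, ba2, bs2, bn2, ma1, ms1, mn1, ma2, ms2, mn2, ta1, ts1, tn1, ta2, ts2, tn2, ta3, ts3, tn3, ra1, rs1, rn1, ra2, rs2, rn2, ra3, rs3, rn3, hmd, hbrd] at h0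
      linear_combination h0
    have hT28 : ω x (b (b c z) y) + ω x (b (b z c) y) = 0 := by
      have h0 := congrArg (fun ξ => ω x (b ξ y)) (hbs z c)
      try simp only [wa1, ws1, wn1, wz1, wa2, ws2, wn2, wz2, ba1, bs1, bn1, ba2, bs2, bn2, ma1, ms1, mn1, ma2, ms2, mn2, ta1, ts1, tn1, ta2, ts2, tn2, ta3, ts3, tn3, ra1, rs1, rn1, ra2, rs2, rn2, ra3, rs3, rn3, hmd, hbrd] at h0
      linear_combination h0
    have hT29 : ω c (b (b x z) y) + ω c (b (b z x) y) = 0 := by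
      have h0 := congrArg (fun ξ => ω c (b ξ y)) (hbs z x)
      try simp only [wa1, ws1, wn1, wz1, wa2, ws2, wn2, wz2, ba1, bs1, bn1, ba2, bs2, bn2, ma1, ms1, mn1, ma2, ms2, mn2, ta1, ts1, tn1, ta2, ts2, tn2, ta3, ts3, tn3, ra1, rs1, rn1, ra2, rs2, rn2, ra3, rs3, rn3, hmd, hbrd] at h0
      linear_combination h0
    simp only [preD, preAssoc, wa1, ws1, wn1, wz1, wa2, ws2, wn2, wz2, ba1, bs1, bn1, ba2, bs2, bn2, ma1, ms1, mn1, ma2, ms2, mn2, ta1, ts1, tn1, ta2, ts2, tn2, ta3, ts3, tn3, ra1, rs1, rn1, ra2, rs2, rn2, ra3, rs3, rn3, hmd, hbrd]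
    linear_combination hT0 + (-1 : K) * hT1 + (-1 : K) * hT2 + (-1 : K) * hT3 + hT4 + hT5 + (-1 : K) * hT6 + (-1 : K) * hT7 + hT8 + hT9 + (-1 : K) * hT10 + hT11 + hT12 + (-1 : K) * hT13 + (-1 : K) * hT14 + hT15 + hT16 + hT17 + (-1 : K) * hT18 + (-1 : K) * hT19 + hT20 + (-1 : K) * hT21 + (-1 : K) * hT22 + (-1 : K) * hT23 + (-1 : K) * hT24 + (-1 : K) * hT25 + (-1 : K) * hT26 + (-1 : K) * hT27 + (-1 : K) * hT28 + (-1 : K) * hT29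
  have hDfor : ∀ x y z : g, preD m br x y z = t x y z - br x y z + br y x z := by
    intro x y z
    rw [← hter x y z]
    abel
  have hP1 : ∀ x y z w : g, br z (preC m x y) w - br (m y z) x w + br (m x z) y w = 0 := by
    intro x y z w
    refine hnd _ fun c => ?_
    have hA0 : -ω z (t c w (b y x)) - ω z (t c w (m x y)) + ω z (t c w (m y x)) = 0 := by
      have h0 := congrArg (fun ξ => ω z (t c w ξ)) (hcomm y x)
      try simp only [wa1, ws1, wn1, wz1, wa2, ws2, wn2, wz2, ba1, bs1, bn1, ba2, bs2, bn2, ma1, ms1, mn1, ma2, ms2, mn2, ta1, ts1, tn1, ta2, ts2, tn2, ta3, ts3, tn3, ra1, rs1, rn1, ra2, rs2, rn2, ra3, rs3, rn3, hmd, hbrd] at h0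
      linear_combination h0
    have hA1 : ω z (b x (t c w y)) + ω z (b (t c w y) x) = 0 := by
      have h0 := hbsk z x (t c w y)
      try simp only [wa1, ws1, wn1, wz1, wa2, ws2, wn2, wz2, ba1, bs1, bn1, ba2, bs2, bn2, ma1, ms1, mn1, ma2, ms2, mn2, ta1, ts1, tn1, ta2, ts2, tn2, ta3, ts3, tn3, ra1, rs1, rn1, ra2, rs2, rn2, ra3, rs3, rn3, hmd, hbrd] at h0
      linear_combination h0
    have hA2 : -ω z (b y (t c w x)) - ω z (b (t c w y) x) + ω z (t c w (b y x)) = 0 := by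
      have h0 := hly3 z c w y x
      try simp only [wa1, ws1, wn1, wz1, wa2, ws2, wn2, wz2, ba1, bs1, bn1, ba2, bs2, bn2, ma1, ms1, mn1, ma2, ms2, mn2, ta1, ts1, tn1, ta2, ts2, tn2, ta3, ts3, tn3, ra1, rs1, rn1, ra2, rs2, rn2, ra3, rs3, rn3, hmd, hbrd] at h0
      linear_combination h0
    simp only [preC, wa1, ws1, wn1, wz1, wa2, ws2, wn2, wz2, ba1, bs1, bn1, ba2, bs2, bn2, ma1, ms1, mn1, ma2, ms2, mn2, ta1, ts1, tn1, ta2, ts2, tn2, ta3, ts3, tn3, ra1, rs1, rn1, ra2, rs2, rn2, ra3, rs3, rn3, hmd, hbrd]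
    linear_combination (-1 : K) * hA0 + (-1 : K) * hA1 + (-1 : K) * hA2
  have hP2 : ∀ x y z w : g, br x y (preC m z w) = m z (br x y w) - m w (br x y z) := by
    intro x y z w
    rw [← sub_eq_zero]
    refine hnd _ fun c => ?_
    have hB0 : -ω x (t c (b z w) y) - ω x (t c (m w z) y) + ω x (t c (m z w) y) = 0 := by
      have h0 := congrArg (fun ξ => ω x (t c ξ y)) (hcomm z w)
      try simp only [wa1, ws1, wn1, wz1, wa2, ws2, wn2, wz2, ba1, bs1, bn1, ba2, bs2, bn2, ma1, ms1, mn1, ma2, ms2, mn2, ta1, ts1, tn1, ta2, ts2, tn2, ta3, ts3, tn3, ra1, rs1, rn1, ra2, rs2, rn2, ra3, rs3, rn3, hmd, hbrd] at h0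
      linear_combination h0
    have hB1 : ω x (t (b c w) z y) + ω x (t (b w z) c y) + ω x (t (b z c) w y) = 0 := by
      have h0 := hly2 x c w z y
      try simp only [wa1, ws1, wn1, wz1, wa2, ws2, wn2, wz2, ba1, bs1, bn1, ba2, bs2, bn2, ma1, ms1, mn1, ma2, ms2, mn2, ta1, ts1, tn1, ta2, ts2, tn2, ta3, ts3, tn3, ra1, rs1, rn1, ra2, rs2, rn2, ra3, rs3, rn3, hmd, hbrd] at h0
      linear_combination h0
    have hB2 : ω x (t c (b z w) y) + ω x (t (b z w) c y) = 0 := by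
      have h0 := htsk x c (b z w) y
      try simp only [wa1, ws1, wn1, wz1, wa2, ws2, wn2, wz2, ba1, bs1, bn1, ba2, bs2, bn2, ma1, ms1, mn1, ma2, ms2, mn2, ta1, ts1, tn1, ta2, ts2, tn2, ta3, ts3, tn3, ra1, rs1, rn1, ra2, rs2, rn2, ra3, rs3, rn3, hmd, hbrd] at h0
      linear_combination h0
    have hB3 : ω x (t (b c w) z y) + ω x (t (b w c) z y) = 0 := by
      have h0 := congrArg (fun ξ => ω x (t ξ z y)) (hbs w c)
      try simp only [wa1, ws1, wn1, wz1, wa2, ws2, wn2, wz2, ba1, bs1, bn1, ba2, bs2, bn2, ma1, ms1, mn1, ma2, ms2, mn2, ta1, ts1, tn1, ta2, ts2, tn2, ta3, ts3, tn3, ra1, rs1, rn1, ra2, rs2, rn2, ra3, rs3, rn3, hmd, hbrd] at h0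
      linear_combination h0
    have hB4 : ω x (t (b w z) c y) + ω x (t (b z w) c y) = 0 := by
      have h0 := congrArg (fun ξ => ω x (t ξ c y)) (hbs w z)
      try simp only [wa1, ws1, wn1, wz1, wa2, ws2, wn2, wz2, ba1, bs1, bn1, ba2, bs2, bn2, ma1, ms1, mn1, ma2, ms2, mn2, ta1, ts1, tn1, ta2, ts2, tn2, ta3, ts3, tn3, ra1, rs1, rn1, ra2, rs2, rn2, ra3, rs3, rn3, hmd, hbrd] at h0
      linear_combination h0
    simp only [preC, wa1, ws1, wn1, wz1, wa2, ws2, wn2, wz2, ba1, bs1, bn1, ba2, bs2, bn2, ma1, ms1, mn1, ma2, ms2, mn2, ta1, ts1, tn1, ta2, ts2, tn2, ta3, ts3, tn3, ra1, rs1, rn1, ra2, rs2, rn2, ra3, rs3, rn3, hmd, hbrd]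
    linear_combination hB0 + hB1 + hB2 + (-1 : K) * hB3 + (-1 : K) * hB4
  have hP3 : ∀ x y z w u : g, br (br x y z) w u - br (br x y w) z u - br x y (preD m br z w u) - br x y (br z w u) + br x y (br w z u) + preD m br z w (br x y u) = 0 := by
    intro x y z w u
    refine hnd _ fun c => ?_
    have hD0 : -ω c (t z w (br x y u)) + ω w (t c (br x y u) z) + ω x (t (t z w c) u y) - ω z (t c (br x y u) w) = 0 := by
      have h0 := hc2 c (br x y u) w z
      try simp only [wa1, ws1, wn1, wz1, wa2, ws2, wn2, wz2, ba1, bs1, bn1, ba2, bs2, bn2, ma1, ms1, mn1, ma2, ms2, mn2, ta1, ts1, tn1, ta2, ts2, tn2, ta3, ts3, tn3, ra1, rs1, rn1, ra2, rs2, rn2, ra3, rs3, rn3, hmd, hbrd] at h0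
      linear_combination h0
    have hD1 : ω x (t c u (t z w y)) - ω x (t z w (t c u y)) - ω x (t z (t c u w) y) - ω x (t (t c u z) w y) = 0 := by
      have h0 := hly4 x c u z w y
      try simp only [wa1, ws1, wn1, wz1, wa2, ws2, wn2, wz2, ba1, bs1, bn1, ba2, bs2, bn2, ma1, ms1, mn1, ma2, ms2, mn2, ta1, ts1, tn1, ta2, ts2, tn2, ta3, ts3, tn3, ra1, rs1, rn1, ra2, rs2, rn2, ra3, rs3, rn3, hmd, hbrd] at h0
      linear_combination h0
    have hD2 : -ω x (t c u (t z w y)) - ω x (t c (t z w u) y) + ω x (t z w (t c u y)) - ω x (t (t z w c) u y) = 0 := by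
      have h0 := hly4 x z w c u y
      try simp only [wa1, ws1, wn1, wz1, wa2, ws2, wn2, wz2, ba1, bs1, bn1, ba2, bs2, bn2, ma1, ms1, mn1, ma2, ms2, mn2, ta1, ts1, tn1, ta2, ts2, tn2, ta3, ts3, tn3, ra1, rs1, rn1, ra2, rs2, rn2, ra3, rs3, rn3, hmd, hbrd] at h0
      linear_combination h0
    have hD3 : ω c (t z w (br x y u)) + ω (t z w (br x y u)) c = 0 := by
      have h0 := hsk c (t z w (br x y u))
      try simp only [wa1, ws1, wn1, wz1, wa2, ws2, wn2, wz2, ba1, bs1, bn1, ba2, bs2, bn2, ma1, ms1, mn1, ma2, ms2, mn2, ta1, ts1, tn1, ta2, ts2, tn2, ta3, ts3, tn3, ra1, rs1, rn1, ra2, rs2, rn2, ra3, rs3, rn3, hmd, hbrd] at h0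
      linear_combination h0
    have hD4 : ω x (t z (t c u w) y) + ω x (t (t c u w) z y) = 0 := by
      have h0 := htsk x (t c u w) z y
      try simp only [wa1, ws1, wn1, wz1, wa2, ws2, wn2, wz2, ba1, bs1, bn1, ba2, bs2, bn2, ma1, ms1, mn1, ma2, ms2, mn2, ta1, ts1, tn1, ta2, ts2, tn2, ta3, ts3, tn3, ra1, rs1, rn1, ra2, rs2, rn2, ra3, rs3, rn3, hmd, hbrd] at h0
      linear_combination h0
    simp only [hDfor, wa1, ws1, wn1, wz1, wa2, ws2, wn2, wz2, ba1, bs1, bn1, ba2, bs2, bn2, ma1, ms1, mn1, ma2, ms2, mn2, ta1, ts1, tn1, ta2, ts2, tn2, ta3, ts3, tn3, ra1, rs1, rn1, ra2, rs2, rn2, ra3, rs3, rn3, hmd, hbrd]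
    linear_combination hD0 + hD1 + hD2 + hD3 + hD4
  have hP4 : ∀ x y z w u : g, br z (preD m br x y w) u + br z (br x y w) u - br z (br y x w) u + br z w (preD m br x y u) + br z w (br x y u) - br z w (br y x u) = preD m br x y (br z w u) - br (preD m br x y z) w u := by
    intro x y z w u
    rw [← sub_eq_zero]
    refine hnd _ fun c => ?_
    have hE0 : -ω c (t x y (br z w u)) - ω x (t c (br z w u) y) + ω y (t c (br z w u) x) + ω z (t (t x y c) u w) = 0 := by
      have h0 := hc2 c (br z w u) y x
      try simp only [wa1, ws1, wn1, wz1, wa2, ws2, wn2, wz2, ba1, bs1, bn1, ba2, bs2, bn2, ma1, ms1, mn1, ma2, ms2, mn2, ta1, ts1, tn1, ta2, ts2, tn2, ta3, ts3, tn3, ra1, rs1, rn1, ra2, rs2, rn2, ra3, rs3, rn3, hmd, hbrd] at h0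
      linear_combination h0
    have hE1 : -ω x (t z (t c u w) y) + ω y (t z (t c u w) x) - ω z (t x y (t c u w)) + ω (t c u w) (t x y z) = 0 := by
      have h0 := hc2 x y (t c u w) z
      try simp only [wa1, ws1, wn1, wz1, wa2, ws2, wn2, wz2, ba1, bs1, bn1, ba2, bs2, bn2, ma1, ms1, mn1, ma2, ms2, mn2, ta1, ts1, tn1, ta2, ts2, tn2, ta3, ts3, tn3, ra1, rs1, rn1, ra2, rs2, rn2, ra3, rs3, rn3, hmd, hbrd] at h0
      linear_combination h0
    have hE2 : -ω z (t c u (t x y w)) - ω z (t c (t x y u) w) + ω z (t x y (t c u w)) - ω z (t (t x y c) u w) = 0 := by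
      have h0 := hly4 z x y c u w
      try simp only [wa1, ws1, wn1, wz1, wa2, ws2, wn2, wz2, ba1, bs1, bn1, ba2, bs2, bn2, ma1, ms1, mn1, ma2, ms2, mn2, ta1, ts1, tn1, ta2, ts2, tn2, ta3, ts3, tn3, ra1, rs1, rn1, ra2, rs2, rn2, ra3, rs3, rn3, hmd, hbrd] at h0
      linear_combination h0
    have hE3 : ω c (t x y (br z w u)) + ω (t x y (br z w u)) c = 0 := by
      have h0 := hsk c (t x y (br z w u))
      try simp only [wa1, ws1, wn1, wz1, wa2, ws2, wn2, wz2, ba1, bs1, bn1, ba2, bs2, bn2, ma1, ms1, mn1, ma2, ms2, mn2, ta1, ts1, tn1, ta2, ts2, tn2, ta3, ts3, tn3, ra1, rs1, rn1, ra2, rs2, rn2, ra3, rs3, rn3, hmd, hbrd] at h0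
      linear_combination h0
    have hE4 : ω (t c u w) (t x y z) + ω (t x y z) (t c u w) = 0 := by
      have h0 := hsk (t c u w) (t x y z)
      try simp only [wa1, ws1, wn1, wz1, wa2, ws2, wn2, wz2, ba1, bs1, bn1, ba2, bs2, bn2, ma1, ms1, mn1, ma2, ms2, mn2, ta1, ts1, tn1, ta2, ts2, tn2, ta3, ts3, tn3, ra1, rs1, rn1, ra2, rs2, rn2, ra3, rs3, rn3, hmd, hbrd] at h0
      linear_combination h0
    have hE5 : ω x (t z (t c u w) y) + ω x (t (t c u w) z y) = 0 := by
      have h0 := htsk x (t c u w) z y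
      try simp only [wa1, ws1, wn1, wz1, wa2, ws2, wn2, wz2, ba1, bs1, bn1, ba2, bs2, bn2, ma1, ms1, mn1, ma2, ms2, mn2, ta1, ts1, tn1, ta2, ts2, tn2, ta3, ts3, tn3, ra1, rs1, rn1, ra2, rs2, rn2, ra3, rs3, rn3, hmd, hbrd] at h0
      linear_combination h0
    have hE6 : ω y (t z (t c u w) x) + ω y (t (t c u w) z x) = 0 := by
      have h0 := htsk y (t c u w) z x
      try simp only [wa1, ws1, wn1, wz1, wa2, ws2, wn2, wz2, ba1, bs1, bn1, ba2, bs2, bn2, ma1, ms1, mn1, ma2, ms2, mn2, ta1, ts1, tn1, ta2, ts2, tn2, ta3, ts3, tn3, ra1, rs1, rn1, ra2, rs2, rn2, ra3, rs3, rn3, hmd, hbrd] at h0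
      linear_combination h0
    simp only [hDfor, wa1, ws1, wn1, wz1, wa2, ws2, wn2, wz2, ba1, bs1, bn1, ba2, bs2, bn2, ma1, ms1, mn1, ma2, ms2, mn2, ta1, ts1, tn1, ta2, ts2, tn2, ta3, ts3, tn3, ra1, rs1, rn1, ra2, rs2, rn2, ra3, rs3, rn3, hmd, hbrd]
    linear_combination (-1 : K) * hE0 + (-1 : K) * hE1 + (-1 : K) * hE2 + (-1 : K) * hE3 + hE4 + (-1 : K) * hE5 + hE6
  have hP5 : ∀ x y z w : g, m (preD m br x y z) w + m (br x y z) w - m (br y x z) w = preD m br x y (m z w) - m z (preD m br x y w) := by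
    intro x y z w
    rw [← sub_eq_zero]
    refine hnd _ fun c => ?_
    have hF0 : -ω c (t x y (m z w)) - ω w (b z (t x y c)) - ω x (t c (m z w) y) + ω y (t c (m z w) x) = 0 := by
      have h0 := hc2 c (m z w) y x
      try simp only [wa1, ws1, wn1, wz1, wa2, ws2, wn2, wz2, ba1, bs1, bn1, ba2, bs2, bn2, ma1, ms1, mn1, ma2, ms2, mn2, ta1, ts1, tn1, ta2, ts2, tn2, ta3, ts3, tn3, ra1, rs1, rn1, ra2, rs2, rn2, ra3, rs3, rn3, hmd, hbrd] at h0
      linear_combination h0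
    have hF1 : -ω w (t x y (b z c)) - ω x (t w (b z c) y) + ω y (t w (b z c) x) + ω (b z c) (t x y w) = 0 := by
      have h0 := hc2 w (b z c) y x
      try simp only [wa1, ws1, wn1, wz1, wa2, ws2, wn2, wz2, ba1, bs1, bn1, ba2, bs2, bn2, ma1, ms1, mn1, ma2, ms2, mn2, ta1, ts1, tn1, ta2, ts2, tn2, ta3, ts3, tn3, ra1, rs1, rn1, ra2, rs2, rn2, ra3, rs3, rn3, hmd, hbrd] at h0
      linear_combination h0
    have hF2 : -ω w (b z (t x y c)) - ω w (b (t x y z) c) + ω w (t x y (b z c)) = 0 := by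
      have h0 := hly3 w x y z c
      try simp only [wa1, ws1, wn1, wz1, wa2, ws2, wn2, wz2, ba1, bs1, bn1, ba2, bs2, bn2, ma1, ms1, mn1, ma2, ms2, mn2, ta1, ts1, tn1, ta2, ts2, tn2, ta3, ts3, tn3, ra1, rs1, rn1, ra2, rs2, rn2, ra3, rs3, rn3, hmd, hbrd] at h0
      linear_combination h0
    have hF3 : ω c (t x y (m z w)) + ω (t x y (m z w)) c = 0 := by
      have h0 := hsk c (t x y (m z w))
      try simp only [wa1, ws1, wn1, wz1, wa2, ws2, wn2, wz2, ba1, bs1, bn1, ba2, bs2, bn2, ma1, ms1, mn1, ma2, ms2, mn2, ta1, ts1, tn1, ta2, ts2, tn2, ta3, ts3, tn3, ra1, rs1, rn1, ra2, rs2, rn2, ra3, rs3, rn3, hmd, hbrd] at h0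
      linear_combination h0
    have hF4 : ω (b z c) (t x y w) + ω (t x y w) (b z c) = 0 := by
      have h0 := hsk (t x y w) (b z c)
      try simp only [wa1, ws1, wn1, wz1, wa2, ws2, wn2, wz2, ba1, bs1, bn1, ba2, bs2, bn2, ma1, ms1, mn1, ma2, ms2, mn2, ta1, ts1, tn1, ta2, ts2, tn2, ta3, ts3, tn3, ra1, rs1, rn1, ra2, rs2, rn2, ra3, rs3, rn3, hmd, hbrd] at h0
      linear_combination h0
    have hF5 : ω x (t w (b z c) y) + ω x (t (b z c) w y) = 0 := by
      have h0 := htsk x w (b z c) y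
      try simp only [wa1, ws1, wn1, wz1, wa2, ws2, wn2, wz2, ba1, bs1, bn1, ba2, bs2, bn2, ma1, ms1, mn1, ma2, ms2, mn2, ta1, ts1, tn1, ta2, ts2, tn2, ta3, ts3, tn3, ra1, rs1, rn1, ra2, rs2, rn2, ra3, rs3, rn3, hmd, hbrd] at h0
      linear_combination h0
    have hF6 : ω y (t w (b z c) x) + ω y (t (b z c) w x) = 0 := by
      have h0 := htsk y w (b z c) x
      try simp only [wa1, ws1, wn1, wz1, wa2, ws2, wn2, wz2, ba1, bs1, bn1, ba2, bs2, bn2, ma1, ms1, mn1, ma2, ms2, mn2, ta1, ts1, tn1, ta2, ts2, tn2, ta3, ts3, tn3, ra1, rs1, rn1, ra2, rs2, rn2, ra3, rs3, rn3, hmd, hbrd] at h0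
      linear_combination h0
    simp only [hDfor, wa1, ws1, wn1, wz1, wa2, ws2, wn2, wz2, ba1, bs1, bn1, ba2, bs2, bn2, ma1, ms1, mn1, ma2, ms2, mn2, ta1, ts1, tn1, ta2, ts2, tn2, ta3, ts3, tn3, ra1, rs1, rn1, ra2, rs2, rn2, ra3, rs3, rn3, hmd, hbrd]
    linear_combination (-1 : K) * hF0 + hF1 + hF2 + (-1 : K) * hF3 + (-1 : K) * hF4 + hF5 + (-1 : K) * hF6
  exact ⟨⟨hm, hbrt, hP1, hP2, hP3, hP4, hP5⟩, hcomm, hter⟩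

/-- a symplectic Lie-Yamaguti algebra carries a unique compatible
pre-Lie-Yamaguti algebra structure determined by `ω`. -/
theorem statement15 (K g : Type*) [Field K] [CharZero K] [AddCommGroup g] [Module K g]
    [FiniteDimensional K g]
    (b : g → g → g) (t : g → g → g → g) (h : IsLieYamaguti K b t)
    (ω : g → g → K) (hω : IsSymplectic K b t ω) :
    (∃! m : g → g → g, IsBilin K m ∧ ∀ x y z, ω (m x y) z = - ω y (b x z)) ∧
    (∃! br : g → g → g → g, IsTrilin K br ∧ ∀ x y z w, ω (br x y z) w = ω x (t w z y)) ∧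
    (∀ (m : g → g → g) (br : g → g → g → g),
        (IsBilin K m ∧ ∀ x y z, ω (m x y) z = - ω y (b x z)) →
        (IsTrilin K br ∧ ∀ x y z w, ω (br x y z) w = ω x (t w z y)) →
        IsPreLY K m br ∧ (∀ x y, m x y - m y x = b x y) ∧
        (∀ x y z, preD m br x y z + br x y z - br y x z = t x y z)) := by
  have hω1 : ∀ y, IsLinearMap K fun x => ω x y := hω.1.1
  have hω2 : ∀ x, IsLinearMap K fun y => ω x y := hω.1.2
  have hnd : ∀ x, (∀ y, ω x y = 0) → x = 0 := hω.2.2.1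
  have hbB : IsBilin K b := h.1
  have hbT : IsTrilin K t := h.2.1
  let ωl : g →ₗ[K] Module.Dual K g :=
    { toFun := fun x => IsLinearMap.mk' (ω x) (hω2 x)
      map_add' := fun a d => by ext c; exact (hω1 c).map_add a d
      map_smul' := fun r a => by ext c; exact (hω1 c).map_smul r a }
  have hωl : ∀ x y, ωl x y = ω x y := fun x y => rfl
  have hinj : Function.Injective ωl := by
    rw [← LinearMap.ker_eq_bot, LinearMap.ker_eq_bot']
    intro x hx
    exact hnd x fun y => congrFun (congrArg DFunLike.coe hx) y
  have hsurj : Function.Surjective ωl :=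
    (LinearMap.injective_iff_surjective_of_finrank_eq_finrank
      (Subspace.dual_finrank_eq).symm).mp hinj
  let e := LinearEquiv.ofBijective ωl ⟨hinj, hsurj⟩
  have hext : ∀ a d : g, (∀ c, ω a c = ω d c) → a = d := by
    intro a d had
    have h0 : a - d = 0 := hnd (a - d) fun y => by
      rw [(hω1 y).map_sub, had y, sub_self]
    exact sub_eq_zero.mp h0
  -- construction of m
  let F : g → g → Module.Dual K g := fun x y =>
    IsLinearMap.mk' (fun z => -ω y (b x z))
      ⟨fun z1 z2 => by rw [(hbB.2 x).map_add, (hω2 y).map_add]; ring,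
       fun r z => by rw [(hbB.2 x).map_smul, (hω2 y).map_smul, smul_eq_mul, smul_eq_mul]; ring⟩
  let m0 : g → g → g := fun x y => e.symm (F x y)
  have hm0 : ∀ x y z, ω (m0 x y) z = -ω y (b x z) := fun x y z => by
    have h1 : ωl (m0 x y) = F x y := e.apply_symm_apply (F x y)
    exact congrFun (congrArg DFunLike.coe h1) z
  have hm0bil : IsBilin K m0 := by
    constructor
    · intro y
      constructor
      · intro x1 x2
        refine hext _ _ fun c => ?_
        rw [(hω1 c).map_add, hm0, hm0, hm0, (hbB.1 c).map_add, (hω2 y).map_add]; ring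
      · intro r x
        refine hext _ _ fun c => ?_
        rw [(hω1 c).map_smul, hm0, hm0, (hbB.1 c).map_smul, (hω2 y).map_smul,
          smul_eq_mul, smul_eq_mul]; ring
    · intro x
      constructor
      · intro y1 y2
        refine hext _ _ fun c => ?_
        rw [(hω1 c).map_add, hm0, hm0, hm0, (hω1 (b x c)).map_add]; ring
      · intro r y
        refine hext _ _ fun c => ?_
        rw [(hω1 c).map_smul, hm0, hm0, (hω1 (b x c)).map_smul, smul_eq_mul, smul_eq_mul]; ring
  -- construction of br
  let F3 : g → g → g → Module.Dual K g := fun x y z =>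
    IsLinearMap.mk' (fun w => ω x (t w z y))
      ⟨fun w1 w2 => by rw [(hbT.1 z y).map_add, (hω2 x).map_add],
       fun r w => by rw [(hbT.1 z y).map_smul, (hω2 x).map_smul]⟩
  let br0 : g → g → g → g := fun x y z => e.symm (F3 x y z)
  have hbr0 : ∀ x y z w, ω (br0 x y z) w = ω x (t w z y) := fun x y z w => by
    have h1 : ωl (br0 x y z) = F3 x y z := e.apply_symm_apply (F3 x y z)
    exact congrFun (congrArg DFunLike.coe h1) w
  have hbr0tri : IsTrilin K br0 := by
    refine ⟨fun y z => ⟨fun x1 x2 => ?_, fun r x => ?_⟩,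
      fun x z => ⟨fun y1 y2 => ?_, fun r y => ?_⟩,
      fun x y => ⟨fun z1 z2 => ?_, fun r z => ?_⟩⟩
    · refine hext _ _ fun c => ?_
      rw [(hω1 c).map_add, hbr0, hbr0, hbr0, (hω1 (t c z y)).map_add]
    · refine hext _ _ fun c => ?_
      rw [(hω1 c).map_smul, hbr0, hbr0, (hω1 (t c z y)).map_smul]
    · refine hext _ _ fun c => ?_
      rw [(hω1 c).map_add, hbr0, hbr0, hbr0, (hbT.2.2 c z).map_add, (hω2 x).map_add]
    · refine hext _ _ fun c => ?_
      rw [(hω1 c).map_smul, hbr0, hbr0, (hbT.2.2 c z).map_smul, (hω2 x).map_smul]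
    · refine hext _ _ fun c => ?_
      rw [(hω1 c).map_add, hbr0, hbr0, hbr0, (hbT.2.1 c y).map_add, (hω2 x).map_add]
    · refine hext _ _ fun c => ?_
      rw [(hω1 c).map_smul, hbr0, hbr0, (hbT.2.1 c y).map_smul, (hω2 x).map_smul]
  refine ⟨⟨m0, ⟨hm0bil, hm0⟩, ?_⟩, ⟨br0, ⟨hbr0tri, hbr0⟩, ?_⟩, ?_⟩
  · intro m' hm'
    funext x y
    exact hext _ _ fun c => by rw [hm'.2 x y c, hm0]
  · intro br' hbr'
    funext x y z
    exact hext _ _ fun c => by rw [hbr'.2 x y z c, hbr0]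
  · intro m br hm1 hbr1
    exact statement15_key K g b t h ω hω m br hm1.1 hm1.2 hbr1.1 hbr1.2
end

section
/- Let (g,[·,·],⟨·,·,·⟩;ω) be a finite-dimensional symplectic Lie-Yamaguti algebra over a field K of characteristic 0, and let (*, {·,·,·}) be the compatible pre-Lie-Yamaguti algebra structure on g determined by ω(x*y,z) = −ω(y,[x,z]) and ω({x,y,z},w) = ω(x,⟨w,z,y⟩) for all x,y,z,w in g. Then for all x,y,z,w in g: ω({x,y,z}_D,w) = −ω(z,⟨x,y,w⟩), where {x,y,z}_D := {z,y,x}−{z,x,y}+(y,x,z)−(x,y,z) and (x,y,z) := (x*y)*z−x*(y*z). -/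
/-- for the compatible pre-Lie-Yamaguti structure of a symplectic
Lie-Yamaguti algebra, `ω({x,y,z}_D, w) = −ω(z, ⟨x,y,w⟩)`. -/
theorem statement16 (K g : Type*) [Field K] [CharZero K] [AddCommGroup g] [Module K g]
    [FiniteDimensional K g]
    (b : g → g → g) (t : g → g → g → g) (h : IsLieYamaguti K b t)
    (ω : g → g → K) (hω : IsSymplectic K b t ω)
    (m : g → g → g) (br : g → g → g → g) (hpre : IsPreLY K m br)
    (hm : ∀ x y z, ω (m x y) z = - ω y (b x z))
    (hbr : ∀ x y z w, ω (br x y z) w = ω x (t w z y))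
    (hc1 : ∀ x y, m x y - m y x = b x y)
    (hc2 : ∀ x y z, preD m br x y z + br x y z - br y x z = t x y z) :
    ∀ x y z w, ω (preD m br x y z) w = - ω z (t x y w) := by
  intro x y z w
  have hpd : preD m br x y z = t x y z - br x y z + br y x z := by
    rw [← hc2 x y z]; abel
  have hlin := hω.1.1 w
  have e1 : ω (preD m br x y z) w
      = ω (t x y z) w - ω (br x y z) w + ω (br y x z) w := by
    rw [hpd, hlin.map_add, hlin.map_sub]
  have e2 := hω.2.2.2.2 x y z w
  have e3 := hω.2.1 (t x y z) w
  rw [e1, hbr, hbr, e3]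
  linear_combination e2
end

section
/- Let (A,*,{·,·,·};ω) be a quadratic pre-Lie-Yamaguti algebra. Then for all x,y,z,w in A: ω({x,y,z}_D,w) = −ω(z,⟨x,y,w⟩_C), where {x,y,z}_D := {z,y,x}−{z,x,y}+(y,x,z)−(x,y,z), (x,y,z) := (x*y)*z−x*(y*z), and ⟨x,y,w⟩_C := {x,y,w}_D+{x,y,w}−{y,x,w}. -/
/-- in a quadratic pre-Lie-Yamaguti algebra,
`ω({x,y,z}_D, w) = −ω(z, ⟨x,y,w⟩_C)`. -/
theorem statement18 (K A : Type*) [Field K] [CharZero K] [AddCommGroup A] [Module K A]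
    (m : A → A → A) (br : A → A → A → A) (h : IsPreLY K m br)
    (ω : A → A → K) (hbil : IsBilin K ω)
    (hskew : ∀ x y, ω x y = - ω y x)
    (hnd : ∀ x, (∀ y, ω x y = 0) → x = 0)
    (hq1 : ∀ x y z, ω (m x y) z = - ω y (preC m x z))
    (hq2 : ∀ x y z w, ω (br x y z) w = ω x (subT m br w z y)) :
    ∀ x y z w, ω (preD m br x y z) w = - ω z (subT m br x y w) := by
  intro x y z w
  have hF : IsLinearMap K (fun a => ω a w) := hbil.1 w
  have hG : IsLinearMap K (fun a => ω z a) := hbil.2 z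
  set F : A →ₗ[K] K := IsLinearMap.mk' (fun a => ω a w) hF with hFd
  set G : A →ₗ[K] K := IsLinearMap.mk' (fun a => ω z a) hG with hGd
  have hFdef : ∀ a, ω a w = F a := fun a => rfl
  have hGdef : ∀ a, ω z a = G a := fun a => rfl
  have hassoc : ∀ a b, ω (preAssoc m a b z) w
      = ω z (- preC m b (preC m a w) - preC m (m a b) w) := by
    intro a b
    have h1 : ω (m (m a b) z) w = - ω z (preC m (m a b) w) := hq1 _ _ _
    have h2 : ω (m a (m b z)) w = - ω (m b z) (preC m a w) := hq1 _ _ _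
    have h3 : ω (m b z) (preC m a w) = - ω z (preC m b (preC m a w)) := hq1 _ _ _
    have e : ω (preAssoc m a b z) w = ω (m (m a b) z) w - ω (m a (m b z)) w := by
      simp only [preAssoc, hFdef, map_sub]
    rw [e, h1, h2, h3, hGdef, hGdef, hGdef, map_sub, map_neg]
    ring
  have e : ω (preD m br x y z) w
      = ω (br z y x) w - ω (br z x y) w + ω (preAssoc m y x z) w - ω (preAssoc m x y z) w := by
    simp only [preD, hFdef, map_sub, map_add]
  rw [e, hq2, hq2, hassoc, hassoc]
  simp only [hGdef, ← map_sub, ← map_add, ← map_neg]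
  congr 1
  have hm1 : ∀ a b c : A, m (a - b) c = m a c - m b c := fun a b c => (h.1.1 c).map_sub a b
  have hm2 : ∀ a b c : A, m a (b - c) = m a b - m a c := fun a b c => (h.1.2 a).map_sub b c
  simp only [subT, preD, preC, preAssoc, hm1, hm2]
  abel
end

section
/- Let (A,*,{·,·,·};ω) be a quadratic pre-Lie-Yamaguti algebra. Then ω is a symplectic structure on the subadjacent Lie-Yamaguti algebra A^c = (A,[·,·]_C,⟨·,·,·⟩_C); that is, for all x,y,z,w in A: ω(x,[y,z]_C)+ω(y,[z,x]_C)+ω(z,[x,y]_C)=0 and ω(z,⟨x,y,w⟩_C)−ω(x,⟨w,z,y⟩_C)+ω(y,⟨w,z,x⟩_C)−ω(w,⟨x,y,z⟩_C)=0. -/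
/-- the bilinear form of a quadratic pre-Lie-Yamaguti algebra is a
symplectic structure on the subadjacent Lie-Yamaguti algebra. -/
theorem statement19 (K A : Type*) [Field K] [CharZero K] [AddCommGroup A] [Module K A]
    (m : A → A → A) (br : A → A → A → A) (h : IsPreLY K m br)
    (ω : A → A → K) (hbil : IsBilin K ω)
    (hskew : ∀ x y, ω x y = - ω y x)
    (hnd : ∀ x, (∀ y, ω x y = 0) → x = 0)
    (hq1 : ∀ x y z, ω (m x y) z = - ω y (preC m x z))
    (hq2 : ∀ x y z w, ω (br x y z) w = ω x (subT m br w z y)) :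
    IsSymplectic K (preC m) (subT m br) ω := by
  obtain ⟨hm, hbr, _⟩ := h
  have hq1' : ∀ a b c, ω (m a b) c = - ω b (m a c) + ω b (m c a) := by
    intro a b c
    rw [hq1]
    simp only [preC, (hbil.2 b).map_sub]
    ring
  have hq2' : ∀ a b c d, ω (br a b c) d =
      ω a (br b c d) - ω a (br b d c) + ω a (m (m c d) b) - ω a (m c (m d b))
      - ω a (m (m d c) b) + ω a (m d (m c b)) + ω a (br d c b) - ω a (br c d b) := by
    intro a b c d
    rw [hq2]
    simp only [subT, preD, preAssoc, (hbil.2 a).map_sub, (hbil.2 a).map_add]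
    ring
  refine ⟨hbil, hskew, hnd, ?_, ?_⟩
  · intro x y z
    simp only [preC, (hbil.2 x).map_sub, (hbil.2 y).map_sub, (hbil.2 z).map_sub]
    linear_combination (hq1' x z y) - (hq1' z x y) - (hskew y (m x z)) + (hskew (m z x) y)
  · intro x y z w
    simp only [subT, preD, preAssoc, (hbil.2 x).map_sub, (hbil.2 x).map_add,
      (hbil.2 y).map_sub, (hbil.2 y).map_add, (hbil.2 z).map_sub, (hbil.2 z).map_add,
      (hbil.2 w).map_sub, (hbil.2 w).map_add]
    linear_combination (hq2' x y z w) - (hq2' y x z w) - (hq2' z x y w) + (hq2' z y x w)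
      + (hq1' (m x y) w z) - (hq1' w (m x y) z) - (hq1' z (m x y) w) + (hq1' (m y x) z w)
      - (hq1' y (m x z) w) - (hq1' y z (m x w)) + (hq1' y z (m w x)) + (hq1' x (m y z) w)
      + (hq1' x z (m y w)) - (hq1' x z (m w y)) - (hskew w (br z y x))
      + (hskew (m w (m x y)) z) - (hskew z (m (m x y) w)) + (hskew (m y (m x z)) w)
      + (hskew (br z x y) w) - (hskew w (m (m y x) z)) - (hskew (br x y z) w)
      - (hskew w (m x (m y z))) + (hskew (m z (m x y)) w) + (hskew (br y x z) w)
end
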